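/- Covering number of the optimistic value-function class: let 𝒪 = { s ↦ min{ max_a ( r(s,a) + φ(s,a)ᵀw + ‖φ(s,a)‖_A ), H } : ‖w‖₂ ≤ L, A ∈ ℝ^{d×d} symmetric PSD with ‖A‖_F ≤ B²√d/λ }, where ‖φ(s,a)‖₂ ≤ C for all (s,a). Then the ε-covering number 𝒩_ε of 𝒪 in sup distance satisfies ln 𝒩_ε ≤ d ln(1 + 4CL/ε) + d² ln(1 + 8B²C²√d/(λε²)). -/

import Mathlib

open Metric MeasureTheory Set ENNReal

open Finset Matrix


open Metric MeasureTheory Set ENNReal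

-- volume bound for packings
lemma packing_card_le {E : Type*} [NormedAddCommGroup E] [NormedSpace ℝ E]
    [MeasurableSpace E] [BorelSpace E] [FiniteDimensional ℝ E]
    (μ : Measure E) [μ.IsAddHaarMeasure] {R δ : ℝ} (hR : 0 ≤ R) (hδ : 0 < δ)
    (P : Finset E) (hP : ∀ p ∈ P, ‖p‖ ≤ R)
    (hsep : ∀ p ∈ P, ∀ q ∈ P, p ≠ q → δ ≤ dist p q) :
    (P.card : ℝ) ≤ (1 + 2 * R / δ) ^ (Module.finrank ℝ E) := by
  have hδ2 : 0 < δ / 2 := by linarith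
  have hdisj : (P : Set E).PairwiseDisjoint (fun p => ball p (δ / 2)) := by
    intro p hp q hq hpq
    apply Set.disjoint_left.2
    intro z hz1 hz2
    have h1 : dist z p < δ / 2 := mem_ball.1 hz1
    have h2 : dist z q < δ / 2 := mem_ball.1 hz2
    have h3 := hsep p hp q hq hpq
    have h4 := dist_triangle p z q
    rw [dist_comm p z] at h4
    linarith
  have hsub : (⋃ p ∈ P, ball p (δ / 2)) ⊆ ball 0 (R + δ / 2) := by
    intro z hz
    simp only [Set.mem_iUnion] at hz
    obtain ⟨p, hp, hz⟩ := hz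
    have h1 : dist z p < δ / 2 := mem_ball.1 hz
    have h2 : ‖p‖ ≤ R := hP p hp
    rw [mem_ball, dist_zero_right]
    have h5 := dist_triangle z p 0
    rw [dist_zero_right, dist_zero_right] at h5
    linarith
  have hmeas : μ (⋃ p ∈ P, ball p (δ / 2)) = ∑ p ∈ P, μ (ball p (δ / 2)) :=
    measure_biUnion_finset hdisj (fun p _ => measurableSet_ball)
  have hball : ∀ p : E, μ (ball p (δ / 2)) = ENNReal.ofReal ((δ/2) ^ Module.finrank ℝ E) * μ (ball 0 1) :=
    fun p => Measure.addHaar_ball_of_pos μ p hδ2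
  have hbig : μ (ball (0:E) (R + δ / 2)) = ENNReal.ofReal ((R + δ/2) ^ Module.finrank ℝ E) * μ (ball 0 1) :=
    Measure.addHaar_ball_of_pos μ 0 (by linarith)
  have key : (P.card : ℝ≥0∞) * (ENNReal.ofReal ((δ/2) ^ Module.finrank ℝ E) * μ (ball 0 1))
      ≤ ENNReal.ofReal ((R + δ/2) ^ Module.finrank ℝ E) * μ (ball 0 1) := by
    rw [← hbig]
    calc (P.card : ℝ≥0∞) * (ENNReal.ofReal ((δ/2) ^ Module.finrank ℝ E) * μ (ball 0 1))
        = ∑ p ∈ P, μ (ball p (δ / 2)) := by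
          rw [Finset.sum_congr rfl (fun p _ => hball p), Finset.sum_const, nsmul_eq_mul]
      _ = μ (⋃ p ∈ P, ball p (δ / 2)) := hmeas.symm
      _ ≤ μ (ball 0 (R + δ / 2)) := measure_mono hsub
  have hu0 : μ (ball (0:E) 1) ≠ 0 := (measure_ball_pos μ 0 one_pos).ne'
  have hutop : μ (ball (0:E) 1) ≠ ⊤ := measure_ball_lt_top.ne
  rw [← mul_assoc] at key
  have key2 : (P.card : ℝ≥0∞) * ENNReal.ofReal ((δ/2) ^ Module.finrank ℝ E)
      ≤ ENNReal.ofReal ((R + δ/2) ^ Module.finrank ℝ E) :=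
    (ENNReal.mul_le_mul_iff_left hu0 hutop).1 key
  have hpow : (0:ℝ) ≤ (δ/2) ^ Module.finrank ℝ E := by positivity
  rw [← ENNReal.ofReal_natCast, ← ENNReal.ofReal_mul (by positivity)] at key2
  have key3 : (P.card : ℝ) * (δ/2) ^ Module.finrank ℝ E ≤ (R + δ/2) ^ Module.finrank ℝ E :=
    (ENNReal.ofReal_le_ofReal_iff (by positivity)).1 key2
  have heq : (1 + 2 * R / δ) = (R + δ/2) / (δ/2) := by field_simp; ring
  rw [heq, div_pow, le_div_iff₀ (by positivity)]
  exact key3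

lemma exists_net {E : Type*} [NormedAddCommGroup E] [NormedSpace ℝ E]
    [MeasurableSpace E] [BorelSpace E] [FiniteDimensional ℝ E]
    (μ : Measure E) [μ.IsAddHaarMeasure] {R δ : ℝ} (hR : 0 ≤ R) (hδ : 0 < δ) :
    ∃ T : Finset E, (∀ x : E, ‖x‖ ≤ R → ∃ y ∈ T, ‖x - y‖ ≤ δ) ∧
      (T.card : ℝ) ≤ (1 + 2 * R / δ) ^ (Module.finrank ℝ E) := by
  classical
  set 𝒮 : Set (Finset E) :=
    {P | (∀ p ∈ P, ‖p‖ ≤ R) ∧ ∀ p ∈ P, ∀ q ∈ P, p ≠ q → δ ≤ dist p q} with h𝒮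
  have hbound : ∀ P ∈ 𝒮, (P.card : ℝ) ≤ (1 + 2 * R / δ) ^ (Module.finrank ℝ E) :=
    fun P hP => packing_card_le μ hR hδ P hP.1 hP.2
  have hbdd : BddAbove (Finset.card '' 𝒮) := by
    refine ⟨⌈(1 + 2 * R / δ) ^ (Module.finrank ℝ E)⌉₊, ?_⟩
    rintro n ⟨P, hP, rfl⟩
    exact_mod_cast (hbound P hP).trans (Nat.le_ceil _)
  have hne : (Finset.card '' 𝒮).Nonempty := ⟨0, ∅, by simp [h𝒮], rfl⟩
  obtain ⟨P, hP𝒮, hPcard⟩ : ∃ P ∈ 𝒮, P.card = sSup (Finset.card '' 𝒮) := by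
    have := Nat.sSup_mem hne hbdd
    obtain ⟨P, hP, hc⟩ := this
    exact ⟨P, hP, hc⟩
  refine ⟨P, ?_, hbound P hP𝒮⟩
  intro x hx
  by_contra hcon
  push_neg at hcon
  have hxP : x ∉ P := fun hxP => by have := hcon x hxP; simp at this; linarith
  have hins : insert x P ∈ 𝒮 := by
    constructor
    · intro p hp
      rcases Finset.mem_insert.1 hp with rfl | hp
      · exact hx
      · exact hP𝒮.1 p hp
    · intro p hp q hq hpq
      have key : ∀ y ∈ P, δ ≤ dist x y := fun y hy => dist_eq_norm x y ▸ (hcon y hy).le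
      rcases Finset.mem_insert.1 hp with hp1 | hp1 <;> rcases Finset.mem_insert.1 hq with hq1 | hq1
      · exact absurd (hp1.trans hq1.symm) hpq
      · rw [hp1]; exact key q hq1
      · rw [hq1, dist_comm]; exact key p hp1
      · exact hP𝒮.2 p hp1 q hq1 hpq
  have : (insert x P).card ≤ sSup (Finset.card '' 𝒮) := le_csSup hbdd ⟨_, hins, rfl⟩
  rw [Finset.card_insert_of_notMem hxP, hPcard] at this
  omega


lemma exists_net_pi (ι : Type*) [Fintype ι] {R δ : ℝ} (hR : 0 ≤ R) (hδ : 0 < δ) :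
    ∃ T : Finset (ι → ℝ), (∀ x : ι → ℝ, Real.sqrt (∑ i, (x i)^2) ≤ R →
      ∃ y ∈ T, Real.sqrt (∑ i, (x i - y i)^2) ≤ δ) ∧
      (T.card : ℝ) ≤ (1 + 2 * R / δ) ^ (Fintype.card ι) := by
  obtain ⟨T, hcov, hcard⟩ := exists_net (E := EuclideanSpace ℝ ι) volume hR hδ
  have hnorm : ∀ x : EuclideanSpace ℝ ι, ‖x‖ = Real.sqrt (∑ i, (x i)^2) := by
    intro x
    rw [EuclideanSpace.norm_eq]
    congr 1
    exact Finset.sum_congr rfl fun i _ => by rw [Real.norm_eq_abs, sq_abs]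
  refine ⟨T.image (fun y => y.ofLp), ?_, ?_⟩
  · intro x hx
    obtain ⟨y, hy, hxy⟩ := hcov (WithLp.toLp 2 x) (by rw [hnorm]; exact hx)
    refine ⟨y.ofLp, Finset.mem_image_of_mem _ hy, ?_⟩
    rw [hnorm] at hxy
    simp only [WithLp.ofLp_sub, Pi.sub_apply] at hxy
    convert hxy using 3
  · rw [finrank_euclideanSpace] at hcard
    exact le_trans (by exact_mod_cast Finset.card_image_le) hcard

open Finset Matrix

lemma sqrt_abs_diff {x y : ℝ} (hx : 0 ≤ x) :
    |Real.sqrt x - Real.sqrt y| ≤ Real.sqrt |x - y| := by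
  rcases le_or_gt y 0 with hy | hy
  · rw [Real.sqrt_eq_zero_of_nonpos hy, sub_zero, abs_of_nonneg (Real.sqrt_nonneg x)]
    exact Real.sqrt_le_sqrt (by rw [abs_of_nonneg (by linarith)]; linarith)
  · rcases le_total y x with h | h
    · rw [abs_of_nonneg (by linarith [Real.sqrt_le_sqrt h] : (0:ℝ) ≤ Real.sqrt x - Real.sqrt y),
        abs_of_nonneg (by linarith)]
      nlinarith [Real.sq_sqrt hx, Real.sq_sqrt hy.le, Real.sq_sqrt (by linarith : (0:ℝ) ≤ x - y),
        Real.sqrt_nonneg x, Real.sqrt_nonneg y, Real.sqrt_nonneg (x - y),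
        mul_nonneg (Real.sqrt_nonneg y) (Real.sqrt_nonneg (x - y))]
    · rw [abs_of_nonpos (by linarith [Real.sqrt_le_sqrt h] : Real.sqrt x - Real.sqrt y ≤ 0),
        abs_of_nonpos (by linarith), neg_sub, neg_sub]
      nlinarith [Real.sq_sqrt hx, Real.sq_sqrt hy.le, Real.sq_sqrt (by linarith : (0:ℝ) ≤ y - x),
        Real.sqrt_nonneg x, Real.sqrt_nonneg y, Real.sqrt_nonneg (y - x),
        mul_nonneg (Real.sqrt_nonneg x) (Real.sqrt_nonneg (y - x))]

lemma min_lip {a b c : ℝ} : |min a c - min b c| ≤ |a - b| := by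
  rcases le_total a c with h1 | h1 <;> rcases le_total b c with h2 | h2 <;>
    simp [min_eq_left, min_eq_right, h1, h2] <;> rw [abs_le] <;>
    constructor <;> cases abs_cases (a - b) <;> linarith

lemma sup'_lip {A : Type*} [Fintype A] [Nonempty A] (f g : A → ℝ) (δ : ℝ)
    (h : ∀ a, |f a - g a| ≤ δ) :
    |Finset.univ.sup' Finset.univ_nonempty f - Finset.univ.sup' Finset.univ_nonempty g| ≤ δ := by
  rw [abs_le]
  constructor
  · rw [neg_le, neg_sub, sub_le_iff_le_add]
    apply Finset.sup'_le
    intro a _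
    have h1 := (abs_le.1 (h a)).1
    have h2 := Finset.le_sup' f (Finset.mem_univ a)
    linarith
  · rw [sub_le_iff_le_add]
    apply Finset.sup'_le
    intro a _
    have h1 := (abs_le.1 (h a)).2
    have h2 := Finset.le_sup' g (Finset.mem_univ a)
    linarith

lemma dot_abs_le {n : ℕ} (f g : Fin n → ℝ) :
    |∑ i, f i * g i| ≤ Real.sqrt (∑ i, (f i)^2) * Real.sqrt (∑ i, (g i)^2) := by
  rw [abs_le]
  constructor
  · have h := Real.sum_mul_le_sqrt_mul_sqrt Finset.univ (fun i => -f i) g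
    simp only [neg_mul, Finset.sum_neg_distrib, neg_sq] at h
    linarith
  · exact Real.sum_mul_le_sqrt_mul_sqrt Finset.univ f g

lemma quad_bound {n : ℕ} (φ : Fin n → ℝ) (M : Matrix (Fin n) (Fin n) ℝ) :
    |φ ⬝ᵥ (M *ᵥ φ)| ≤ (∑ i, (φ i)^2) * Real.sqrt (∑ i, ∑ j, (M i j)^2) := by
  have h1 : |φ ⬝ᵥ (M *ᵥ φ)| ≤ Real.sqrt (∑ i, (φ i)^2) * Real.sqrt (∑ i, ((M *ᵥ φ) i)^2) := by
    have := dot_abs_le φ (M *ᵥ φ)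
    simpa [dotProduct] using this
  have h2 : (∑ i, ((M *ᵥ φ) i)^2) ≤ (∑ i, ∑ j, (M i j)^2) * (∑ j, (φ j)^2) := by
    rw [Finset.sum_mul]
    apply Finset.sum_le_sum
    intro i _
    have := Finset.sum_mul_sq_le_sq_mul_sq Finset.univ (fun j => M i j) φ
    simpa [Matrix.mulVec, dotProduct] using this
  have h3 : Real.sqrt (∑ i, ((M *ᵥ φ) i)^2) ≤
      Real.sqrt (∑ i, ∑ j, (M i j)^2) * Real.sqrt (∑ j, (φ j)^2) := by
    rw [← Real.sqrt_mul (by positivity)]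
    exact Real.sqrt_le_sqrt h2
  calc |φ ⬝ᵥ (M *ᵥ φ)| ≤ Real.sqrt (∑ i, (φ i)^2) * Real.sqrt (∑ i, ((M *ᵥ φ) i)^2) := h1
    _ ≤ Real.sqrt (∑ i, (φ i)^2) * (Real.sqrt (∑ i, ∑ j, (M i j)^2) * Real.sqrt (∑ j, (φ j)^2)) :=
        mul_le_mul_of_nonneg_left h3 (Real.sqrt_nonneg _)
    _ = (∑ i, (φ i)^2) * Real.sqrt (∑ i, ∑ j, (M i j)^2) := by
        rw [mul_comm (Real.sqrt (∑ i, ∑ j, (M i j)^2)), ← mul_assoc,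
          Real.mul_self_sqrt (by positivity)]


open Matrix Finset

/-- Covering number of the optimistic value-function class:
`ln 𝒩_ε ≤ d ln(1 + 4CL/ε) + d² ln(1 + 8B²C²√d/(λε²))`. -/
theorem stmt10 (S A : Type*) [Fintype A] [Nonempty A]
    (d : ℕ) (r : S → A → ℝ) (φ : S → A → Fin d → ℝ)
    (C L B lam H ε : ℝ) (hC : 0 ≤ C) (hL : 0 ≤ L) (hB : 0 ≤ B)
    (hlam : 0 < lam) (hH : 0 ≤ H) (hε : 0 < ε)
    (hφ : ∀ s a, Real.sqrt (∑ i, (φ s a i) ^ 2) ≤ C) :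
    ∃ N : Finset (S → ℝ),
      (∀ (w : Fin d → ℝ) (A2 : Matrix (Fin d) (Fin d) ℝ),
        Real.sqrt (∑ i, (w i) ^ 2) ≤ L → A2.PosSemidef →
        Real.sqrt (∑ i, ∑ j, (A2 i j) ^ 2) ≤ B ^ 2 * Real.sqrt d / lam →
        ∃ g ∈ N, ∀ s : S,
          |min (Finset.univ.sup' Finset.univ_nonempty (fun a =>
              r s a + (∑ i, φ s a i * w i) +
                Real.sqrt (φ s a ⬝ᵥ (A2 *ᵥ φ s a)))) H - g s| ≤ ε) ∧
      Real.log N.card ≤ d * Real.log (1 + 4 * C * L / ε) +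
        (d : ℝ) ^ 2 * Real.log (1 + 8 * B ^ 2 * C ^ 2 * Real.sqrt d / (lam * ε ^ 2)) := by
  classical
  rcases eq_or_lt_of_le hC with hC0 | hCpos
  · -- degenerate case C = 0
    have hφ0 : ∀ s a i, φ s a i = 0 := by
      intro s a i
      have h1 := hφ s a
      rw [← hC0] at h1
      have h2 : Real.sqrt (∑ i, (φ s a i) ^ 2) = 0 :=
        le_antisymm h1 (Real.sqrt_nonneg _)
      have h3 : (∑ j, (φ s a j) ^ 2) ≤ 0 := Real.sqrt_eq_zero'.1 h2
      have h4 : (∑ j, (φ s a j) ^ 2) = 0 := le_antisymm h3 (by positivity)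
      have h5 := (Finset.sum_eq_zero_iff_of_nonneg
        (fun j _ => sq_nonneg (φ s a j))).1 h4 i (Finset.mem_univ i)
      exact pow_eq_zero_iff (by norm_num) |>.1 h5
    refine ⟨{fun s => min (Finset.univ.sup' Finset.univ_nonempty
        (fun a => r s a + 0 + Real.sqrt 0)) H}, ?_, ?_⟩
    · intro w A2 _ _ _
      refine ⟨_, Finset.mem_singleton_self _, fun s => ?_⟩
      have heq : ∀ a ∈ Finset.univ, r s a + (∑ i, φ s a i * w i) +
          Real.sqrt (φ s a ⬝ᵥ (A2 *ᵥ φ s a)) = r s a + 0 + Real.sqrt 0 := by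
        intro a _
        have hφf : φ s a = fun _ => (0:ℝ) := funext (hφ0 s a)
        rw [hφf]
        simp [dotProduct]
      rw [Finset.sup'_congr Finset.univ_nonempty rfl heq]
      simp [hε.le]
    · rw [← hC0]
      norm_num
  · -- main case 0 < C
    set δw : ℝ := ε / (2 * C) with hδw
    set δA : ℝ := ε ^ 2 / (4 * C ^ 2) with hδA
    have hδwpos : 0 < δw := by positivity
    have hδApos : 0 < δA := by positivity
    have hRA : (0:ℝ) ≤ B ^ 2 * Real.sqrt d / lam := by positivity
    obtain ⟨Tw, hTwcov, hTwcard⟩ := exists_net_pi (Fin d) hL hδwpos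
    obtain ⟨TA, hTAcov, hTAcard⟩ := exists_net_pi (Fin d × Fin d) hRA hδApos
    set F : (Fin d → ℝ) → ((Fin d × Fin d) → ℝ) → (S → ℝ) := fun w A' s =>
      min (Finset.univ.sup' Finset.univ_nonempty (fun a =>
        r s a + (∑ i, φ s a i * w i) +
          Real.sqrt (φ s a ⬝ᵥ ((Matrix.of fun i j => A' (i, j)) *ᵥ φ s a)))) H with hF
    refine ⟨(Tw ×ˢ TA).image (fun p => F p.1 p.2), ?_, ?_⟩
    · intro w A2 hw hA2 hA2F
      obtain ⟨w', hw', hww'⟩ := hTwcov w hw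
      obtain ⟨A', hA', hAA'⟩ := hTAcov (fun p => A2 p.1 p.2) (by
        rw [Fintype.sum_prod_type]
        exact hA2F)
      refine ⟨F w' A', Finset.mem_image.2 ⟨(w', A'),
        Finset.mem_product.2 ⟨hw', hA'⟩, rfl⟩, ?_⟩
      intro s
      set M' : Matrix (Fin d) (Fin d) ℝ := Matrix.of fun i j => A' (i, j) with hM'
      have key : ∀ a : A,
          |(r s a + (∑ i, φ s a i * w i) + Real.sqrt (φ s a ⬝ᵥ (A2 *ᵥ φ s a)))
            - (r s a + (∑ i, φ s a i * w' i) + Real.sqrt (φ s a ⬝ᵥ (M' *ᵥ φ s a)))| ≤ ε := by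
        intro a
        have hsum : (∑ i, (φ s a i) ^ 2) ≤ C ^ 2 := by
          nlinarith [hφ s a, Real.sq_sqrt (by positivity : (0:ℝ) ≤ ∑ i, (φ s a i) ^ 2),
            Real.sqrt_nonneg (∑ i, (φ s a i) ^ 2)]
        have hterm1 : |(∑ i, φ s a i * w i) - (∑ i, φ s a i * w' i)| ≤ ε / 2 := by
          have he : (∑ i, φ s a i * w i) - (∑ i, φ s a i * w' i)
              = ∑ i, φ s a i * (w i - w' i) := by
            rw [← Finset.sum_sub_distrib]
            exact Finset.sum_congr rfl fun i _ => by ring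
          rw [he]
          refine le_trans (dot_abs_le (φ s a) (fun i => w i - w' i)) ?_
          have hb := mul_le_mul (hφ s a) hww' (Real.sqrt_nonneg _) hC
          refine le_trans hb ?_
          have hCne : C ≠ 0 := ne_of_gt hCpos
          have he2 : C * δw = ε / 2 := by rw [hδw]; field_simp
          linarith
        have hq1 : 0 ≤ φ s a ⬝ᵥ (A2 *ᵥ φ s a) := by
          have := hA2.dotProduct_mulVec_nonneg (φ s a)
          simpa using this
        have hterm2 : |Real.sqrt (φ s a ⬝ᵥ (A2 *ᵥ φ s a)) -
            Real.sqrt (φ s a ⬝ᵥ (M' *ᵥ φ s a))| ≤ ε / 2 := by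
          refine le_trans (sqrt_abs_diff hq1) ?_
          have hdiff : φ s a ⬝ᵥ (A2 *ᵥ φ s a) - φ s a ⬝ᵥ (M' *ᵥ φ s a)
              = φ s a ⬝ᵥ ((A2 - M') *ᵥ φ s a) := by
            rw [Matrix.sub_mulVec, dotProduct_sub]
          have hMnet : Real.sqrt (∑ i, ∑ j, ((A2 - M') i j) ^ 2) ≤ δA := by
            have heq2 : (∑ i, ∑ j, ((A2 - M') i j) ^ 2)
                = ∑ p : Fin d × Fin d, ((fun p : Fin d × Fin d => A2 p.1 p.2) p - A' p) ^ 2 := by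
              rw [Fintype.sum_prod_type]
              exact Finset.sum_congr rfl fun i _ => Finset.sum_congr rfl fun j _ => by
                simp [hM', Matrix.sub_apply]
            rw [heq2]
            exact hAA'
          have hqb : |φ s a ⬝ᵥ (A2 *ᵥ φ s a) - φ s a ⬝ᵥ (M' *ᵥ φ s a)| ≤ ε ^ 2 / 4 := by
            rw [hdiff]
            refine le_trans (quad_bound (φ s a) (A2 - M')) ?_
            have hb2 := mul_le_mul hsum hMnet (Real.sqrt_nonneg _) (by positivity)
            refine le_trans hb2 ?_
            have hCne : C ≠ 0 := ne_of_gt hCpos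
            have he3 : C ^ 2 * δA = ε ^ 2 / 4 := by
              rw [hδA]; field_simp
            linarith
          calc Real.sqrt |φ s a ⬝ᵥ (A2 *ᵥ φ s a) - φ s a ⬝ᵥ (M' *ᵥ φ s a)|
              ≤ Real.sqrt (ε ^ 2 / 4) := Real.sqrt_le_sqrt hqb
            _ = ε / 2 := by
                rw [show ε ^ 2 / 4 = (ε / 2) ^ 2 by ring, Real.sqrt_sq (by linarith)]
        have hrw : (r s a + (∑ i, φ s a i * w i) + Real.sqrt (φ s a ⬝ᵥ (A2 *ᵥ φ s a)))
            - (r s a + (∑ i, φ s a i * w' i) + Real.sqrt (φ s a ⬝ᵥ (M' *ᵥ φ s a)))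
            = ((∑ i, φ s a i * w i) - (∑ i, φ s a i * w' i))
              + (Real.sqrt (φ s a ⬝ᵥ (A2 *ᵥ φ s a)) - Real.sqrt (φ s a ⬝ᵥ (M' *ᵥ φ s a))) := by
          ring
        rw [hrw]
        exact le_trans (abs_add_le _ _) (by linarith)
      exact le_trans min_lip (sup'_lip _ _ ε key)
    · -- cardinality bound
      have hTwne : Tw.Nonempty := by
        obtain ⟨y, hy, _⟩ := hTwcov 0 (by simpa using hL)
        exact ⟨y, hy⟩
      have hTAne : TA.Nonempty := by
        obtain ⟨y, hy, _⟩ := hTAcov 0 (by simpa using hRA)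
        exact ⟨y, hy⟩
      have hNne : ((Tw ×ˢ TA).image (fun p => F p.1 p.2)).Nonempty :=
        (hTwne.product hTAne).image _
      have hc1 : 0 < Tw.card := Finset.card_pos.2 hTwne
      have hc2 : 0 < TA.card := Finset.card_pos.2 hTAne
      have hcN : 0 < ((Tw ×ˢ TA).image (fun p => F p.1 p.2)).card := Finset.card_pos.2 hNne
      have hcard_le : (((Tw ×ˢ TA).image (fun p => F p.1 p.2)).card : ℝ)
          ≤ (Tw.card : ℝ) * TA.card := by
        have h1 : ((Tw ×ˢ TA).image (fun p => F p.1 p.2)).card ≤ (Tw ×ˢ TA).card :=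
          Finset.card_image_le
        have h2 : (Tw ×ˢ TA).card = Tw.card * TA.card := Finset.card_product _ _
        rw [h2] at h1
        exact_mod_cast h1
      have hCne : C ≠ 0 := ne_of_gt hCpos
      have hεne : ε ≠ 0 := ne_of_gt hε
      have heqw : 1 + 2 * L / δw = 1 + 4 * C * L / ε := by
        rw [hδw]; field_simp; ring
      have heqA : 1 + 2 * (B ^ 2 * Real.sqrt d / lam) / δA
          = 1 + 8 * B ^ 2 * C ^ 2 * Real.sqrt d / (lam * ε ^ 2) := by
        rw [hδA]; field_simp; ring
      have hx1 : (1:ℝ) ≤ 1 + 4 * C * L / ε := by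
        have : 0 ≤ 4 * C * L / ε := by positivity
        linarith
      have hx2 : (1:ℝ) ≤ 1 + 8 * B ^ 2 * C ^ 2 * Real.sqrt d / (lam * ε ^ 2) := by
        have : 0 ≤ 8 * B ^ 2 * C ^ 2 * Real.sqrt d / (lam * ε ^ 2) := by positivity
        linarith
      have hTwcard' : (Tw.card : ℝ) ≤ (1 + 4 * C * L / ε) ^ d := by
        rw [← heqw]
        simpa using hTwcard
      have hTAcard' : (TA.card : ℝ)
          ≤ (1 + 8 * B ^ 2 * C ^ 2 * Real.sqrt d / (lam * ε ^ 2)) ^ (d * d) := by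
        rw [← heqA]
        simpa using hTAcard
      calc Real.log ((Tw ×ˢ TA).image (fun p => F p.1 p.2)).card
          ≤ Real.log ((Tw.card : ℝ) * TA.card) :=
            Real.log_le_log (by exact_mod_cast hcN) hcard_le
        _ = Real.log (Tw.card : ℝ) + Real.log (TA.card : ℝ) :=
            Real.log_mul (by exact_mod_cast hc1.ne') (by exact_mod_cast hc2.ne')
        _ ≤ Real.log ((1 + 4 * C * L / ε) ^ d)
            + Real.log ((1 + 8 * B ^ 2 * C ^ 2 * Real.sqrt d / (lam * ε ^ 2)) ^ (d * d)) := by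
            have g1 : Real.log (Tw.card : ℝ) ≤ Real.log ((1 + 4 * C * L / ε) ^ d) :=
              Real.log_le_log (by exact_mod_cast hc1) hTwcard'
            have g2 : Real.log (TA.card : ℝ) ≤ Real.log
                ((1 + 8 * B ^ 2 * C ^ 2 * Real.sqrt d / (lam * ε ^ 2)) ^ (d * d)) :=
              Real.log_le_log (by exact_mod_cast hc2) hTAcard'
            exact add_le_add g1 g2
        _ = d * Real.log (1 + 4 * C * L / ε) +
            (d : ℝ) ^ 2 * Real.log (1 + 8 * B ^ 2 * C ^ 2 * Real.sqrt d / (lam * ε ^ 2)) := by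
            rw [Real.log_pow, Real.log_pow]
            push_cast
            ring
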